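/- For every d ≥ 1 there is a constant C = C(d) such that for all n ≥ 1, |e_o(B_n) − (n/ω_d)^{2/d}| ≤ C n^{1/d}. -/

import Mathlib

open scoped BigOperators Pointwise symmDiff
open MeasureTheory Filter

noncomputable section
open scoped Classical
namespace RotorRouterPaper

/-- Sites of the lattice `ℤ^d`. -/
abbrev Site (d : ℕ) := Fin d → ℤ

/-- The `i`-th standard basis vector of `ℤ^d`. -/
def unitVec (d : ℕ) (i : Fin d) : Site d := fun j => if j = i then 1 else 0

/-- Squared Euclidean norm of a lattice point. -/
def nsq {d : ℕ} (x : Site d) : ℝ := ∑ i, ((x i : ℝ)) ^ 2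

/-- Euclidean norm of a lattice point. -/
def enorm {d : ℕ} (x : Site d) : ℝ := Real.sqrt (nsq x)

/-- Adjacency `x ∼ y`: Euclidean distance one. -/
def Adj {d : ℕ} (x y : Site d) : Prop := nsq (x - y) = 1

/-- `ω_d`, the Lebesgue volume of the unit ball in `ℝ^d`. -/
def ballVol (d : ℕ) : ℝ := (volume (Metric.ball (0 : EuclideanSpace ℝ (Fin d)) 1)).toReal

/-- The lattice ball `B_n = {y ∈ ℤ^d : ω_d ‖y‖^d < n}`. -/
def lball (d n : ℕ) : Set (Site d) := {y | ballVol d * enorm y ^ d < (n : ℝ)}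

/-- Characterization of the expected exit time function of a (finite) region `A ⊆ ℤ^d`:
it vanishes off `A` and its discrete Laplacian is `-1` on `A`. -/
def IsExitFun (d : ℕ) (A : Set (Site d)) (e : Site d → ℝ) : Prop :=
  (∀ x, x ∉ A → e x = 0) ∧
  ∀ x ∈ A, (1 / (2 * (d : ℝ))) * (∑ i, (e (x + unitVec d i) + e (x - unitVec d i))) - e x = -1

/-- The expected exit time function `x ↦ e_x(A)` (the unique function satisfying
`IsExitFun` when `A` is finite). -/
def exitFun (d : ℕ) (A : Set (Site d)) : Site d → ℝ :=
  if h : ∃ e, IsExitFun d A e then h.choose else 0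

/-- `ē(A) = sup_x e_x(A)`. -/
def ebar (d : ℕ) (A : Set (Site d)) : ℝ := sSup (Set.range (exitFun d A))

/-- `φ(n) = sup {ē(A) - e_o(B_n) : A ⊆ ℤ^d, |A| = n}`. -/
def phi (d n : ℕ) : ℝ :=
  sSup {t | ∃ A : Set (Site d), A.Finite ∧ A.ncard = n ∧ t = ebar d A - exitFun d (lball d n) 0}

/-- `Φ(n) = ∑_{j=1}^n φ(j)`. -/
def PhiSum (d n : ℕ) : ℝ := ∑ j ∈ Finset.Icc 1 n, phi d j

/-- `ψ(A) = ∑_{x ∈ A} ‖x‖²`. -/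
def psi {d : ℕ} (A : Set (Site d)) : ℝ := ∑ᶠ x ∈ A, nsq x

/-- A cardinal direction in `ℤ^d`: one of `±e_1, …, ±e_d`. -/
abbrev Dir (d : ℕ) := Fin d × Bool

/-- The lattice step vector of a cardinal direction. -/
def dirVec (d : ℕ) (ε : Dir d) : Site d := if ε.2 then unitVec d ε.1 else -unitVec d ε.1

/-- A configuration of rotor stacks `r` (with `r x i` the direction used for the
`(i+1)`-st visit to `x`) has discrepancy at most `D` if for every site, direction and `m ≥ 1`,
among the first `m` rotors of the stack each direction occurs `m/(2d)` times up to error `D`. -/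
def HasDiscrepancy (d : ℕ) (D : ℝ) (r : Site d → ℕ → Dir d) : Prop :=
  ∀ (x : Site d) (ε : Dir d) (m : ℕ), 1 ≤ m →
    |(({i | i < m ∧ r x i = ε} : Set ℕ).ncard : ℝ) - (m : ℝ) / (2 * (d : ℝ))| ≤ D

/-- One step of rotor-router walk on a state (current position, visit counts so far):
the particle at `p` being visited for the `(c p + 1)`-st time moves in direction
`r p (c p)` and the visit count at `p` increases by one. -/
def rstep {d : ℕ} (r : Site d → ℕ → Dir d) (s : Site d × (Site d → ℕ)) :
    Site d × (Site d → ℕ) :=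
  (s.1 + dirVec d (r s.1 (s.2 s.1)), Function.update s.2 s.1 (s.2 s.1 + 1))

/-- The state after `t` steps of rotor-router walk started at the origin with visit counts `c`. -/
def walkState {d : ℕ} (r : Site d → ℕ → Dir d) (c : Site d → ℕ) (t : ℕ) :
    Site d × (Site d → ℕ) :=
  (rstep r)^[t] (0, c)

/-- The number of steps until the rotor-router walk started at the origin
(with carried-over visit counts `c`) first leaves the region `A`. -/
def exitSteps {d : ℕ} (r : Site d → ℕ → Dir d) (A : Set (Site d)) (c : Site d → ℕ) : ℕ :=
  sInf {t | (walkState r c t).1 ∉ A}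

/-- The state of rotor-router aggregation after `n` particles have walked and settled:
`(aggState r n).1` is the occupied region `A_{n+1}`, `(aggState r n).2.1` the accumulated
visit counts, and `(aggState r n).2.2` the total number `T_n` of steps taken so far. -/
def aggState {d : ℕ} (r : Site d → ℕ → Dir d) : ℕ → Set (Site d) × (Site d → ℕ) × ℕ
  | 0 => ({0}, fun _ => 0, 0)
  | n + 1 =>
      let s := aggState r n
      let τ := exitSteps r s.1 s.2.1
      (insert (walkState r s.2.1 τ).1 s.1, (walkState r s.2.1 τ).2, s.2.2 + τ)

/-- The region `A_n` of rotor-router aggregation (for `n ≥ 1`). -/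
def aggRegion {d : ℕ} (r : Site d → ℕ → Dir d) (n : ℕ) : Set (Site d) :=
  (aggState r (n - 1)).1

/-- `T_n`, the total number of steps taken by the first `n` particles. -/
def totalSteps {d : ℕ} (r : Site d → ℕ → Dir d) (n : ℕ) : ℕ := (aggState r n).2.2

/-- `A^□ = A + [-1/2,1/2]^d ⊆ ℝ^d`. -/
def box (d : ℕ) (A : Set (Site d)) : Set (EuclideanSpace ℝ (Fin d)) :=
  {z | ∃ x ∈ A, ∀ i, |z i - (x i : ℝ)| ≤ 1 / 2}

/-- The closed Euclidean ball of unit volume centered at the origin of `ℝ^d`. -/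
def unitVolBall (d : ℕ) : Set (EuclideanSpace ℝ (Fin d)) :=
  Metric.closedBall 0 (ballVol d ^ (-(1 : ℝ) / (d : ℝ)))

/-- `A ⊆ ℤ^d` is orthoconvex if every line parallel to a coordinate axis meets `A`
in an interval. -/
def Orthoconvex (d : ℕ) (A : Set (Site d)) : Prop :=
  ∀ x ∈ A, ∀ i : Fin d, ∀ k : ℤ, 0 < k → x + k • unitVec d i ∈ A →
    ∀ j : ℤ, 0 < j → j < k → x + j • unitVec d i ∈ A

/-- The nonnegative orthant `Q ⊆ ℤ^d`. -/
def orthant (d : ℕ) : Set (Site d) := {x | ∀ i, 0 ≤ x i}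

/-- The cube `C(o,r) = {x : ‖x‖_∞ ≤ r}`. -/
def cubeSet (d : ℕ) (r : ℕ) : Set (Site d) := {x | ∀ i, |x i| ≤ (r : ℤ)}

/-- The boundary `∂C(o,r) = {x : ‖x‖_∞ = r + 1 and x ∼ y for some y ∈ C(o,r)}`. -/
def cubeBdry (d : ℕ) (r : ℕ) : Set (Site d) :=
  {x | (∀ i, |x i| ≤ (r : ℤ) + 1) ∧ (∃ i, |x i| = (r : ℤ) + 1) ∧ ∃ y ∈ cubeSet d r, Adj x y}

/-- Characterization of `h_r(x) = P_x(T_Q > T_{∂C(o,r)})`: it vanishes on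
`Q ∩ (C(o,r) ∪ ∂C(o,r))`, equals `1` on `∂C(o,r) ∖ Q`, is discrete harmonic on
`C(o,r) ∖ Q`, and (as a normalization) vanishes off `C(o,r) ∪ ∂C(o,r)`. -/
def IsOrthHarm (d : ℕ) (r : ℕ) (h : Site d → ℝ) : Prop :=
  (∀ x, x ∉ cubeSet d r ∪ cubeBdry d r → h x = 0) ∧
  (∀ x ∈ orthant d ∩ (cubeSet d r ∪ cubeBdry d r), h x = 0) ∧
  (∀ x ∈ cubeBdry d r \ orthant d, h x = 1) ∧
  (∀ x ∈ cubeSet d r \ orthant d,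
    h x = (1 / (2 * (d : ℝ))) * ∑ i, (h (x + unitVec d i) + h (x - unitVec d i)))

/-- The function `h_r` of the previous characterization. -/
def orthHarm (d : ℕ) (r : ℕ) : Site d → ℝ :=
  if h : ∃ f, IsOrthHarm d r f then h.choose else 0

/-- `p(k,r) = sup {h_r(x) : ‖x‖_∞ ≤ k}`. -/
def pkr (d k r : ℕ) : ℝ :=
  sSup {t | ∃ x : Site d, (∀ i, |x i| ≤ (k : ℤ)) ∧ t = orthHarm d r x}

/-- The exponent `γ_d` of Theorem 3.1. -/
def gam (d : ℕ) : ℝ :=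
  if d = 1 then 1 else if d = 2 then 1 / 3
  else (2 : ℝ) ^ (-(d : ℝ)) / (2 * (d : ℝ) ^ 2 * Real.log 3)


/-! ### Auxiliary lemmas for Statement 13 -/

lemma nsq_nonneg' {d : ℕ} (x : Site d) : 0 ≤ nsq x :=
  Finset.sum_nonneg fun i _ => sq_nonneg _

lemma enorm_nonneg' {d : ℕ} (x : Site d) : 0 ≤ enorm x := Real.sqrt_nonneg _

lemma enorm_sq' {d : ℕ} (x : Site d) : enorm x ^ 2 = nsq x :=
  Real.sq_sqrt (nsq_nonneg' x)

lemma abs_coord_le_enorm {d : ℕ} (a : Site d) (i : Fin d) : |(a i : ℝ)| ≤ enorm a := by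
  rw [← Real.sqrt_sq_eq_abs]
  apply Real.sqrt_le_sqrt
  exact Finset.single_le_sum (f := fun j => ((a j : ℝ))^2) (fun j _ => sq_nonneg _) (Finset.mem_univ i)

lemma nsq_add_unit {d : ℕ} (x : Site d) (i : Fin d) :
    nsq (x + unitVec d i) = nsq x + 2 * (x i : ℝ) + 1 := by
  unfold nsq unitVec
  rw [Fintype.sum_eq_add_sum_compl i, Fintype.sum_eq_add_sum_compl i (fun j => ((x j :ℝ))^2)]
  simp only [Pi.add_apply]
  have h1 : ∀ j ∈ ({i}ᶜ : Finset (Fin d)), (((x j + if j = i then 1 else 0 : ℤ) : ℝ))^2 = ((x j : ℝ))^2 := by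
    intro j hj
    simp only [Finset.mem_compl, Finset.mem_singleton] at hj
    rw [if_neg hj]; norm_num
  rw [Finset.sum_congr rfl h1]
  norm_num
  ring

lemma nsq_sub_unit {d : ℕ} (x : Site d) (i : Fin d) :
    nsq (x - unitVec d i) = nsq x - 2 * (x i : ℝ) + 1 := by
  unfold nsq unitVec
  rw [Fintype.sum_eq_add_sum_compl i, Fintype.sum_eq_add_sum_compl i (fun j => ((x j :ℝ))^2)]
  simp only [Pi.sub_apply]
  have h1 : ∀ j ∈ ({i}ᶜ : Finset (Fin d)), (((x j - if j = i then 1 else 0 : ℤ) : ℝ))^2 = ((x j : ℝ))^2 := by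
    intro j hj
    simp only [Finset.mem_compl, Finset.mem_singleton] at hj
    rw [if_neg hj]; norm_num
  rw [Finset.sum_congr rfl h1]
  norm_num
  push_cast
  ring

lemma nsq_sum {d : ℕ} (x : Site d) :
    ∑ i, (nsq (x + unitVec d i) + nsq (x - unitVec d i)) = 2 * d * nsq x + 2 * d := by
  have : ∀ i ∈ Finset.univ, nsq (x + unitVec d i) + nsq (x - unitVec d i) = 2 * nsq x + 2 := by
    intro i _; rw [nsq_add_unit, nsq_sub_unit]; ring
  rw [Finset.sum_congr rfl this, Finset.sum_const]
  simp; ring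

lemma maxp {d : ℕ} (hd : 1 ≤ d) (A : Set (Site d)) (hA : A.Finite) (h : Site d → ℝ) (M : ℝ)
    (harm : ∀ x ∈ A, h x = (1/(2*(d:ℝ))) * ∑ i, (h (x + unitVec d i) + h (x - unitVec d i)))
    (bdd : ∀ x, x ∉ A → (∃ i : Fin d, x + unitVec d i ∈ A ∨ x - unitVec d i ∈ A) → h x ≤ M) :
    ∀ x ∈ A, h x ≤ M := by
  by_contra hc
  push_neg at hc
  obtain ⟨xw, hxwA, hxwM⟩ := hc
  set F := hA.toFinset with hF
  have hxwF : xw ∈ F := hA.mem_toFinset.mpr hxwA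
  have hFne : F.Nonempty := ⟨xw, hxwF⟩
  obtain ⟨xm, hxmF, hxm⟩ := F.exists_max_image h hFne
  set Mmax := h xm with hMmax
  have hMM : M < Mmax := lt_of_lt_of_le hxwM (hxm xw hxwF)
  set i0 : Fin d := ⟨0, hd⟩ with hi0
  set S := F.filter (fun y => h y = Mmax) with hS
  have hSne : S.Nonempty := ⟨xm, Finset.mem_filter.mpr ⟨hxmF, rfl⟩⟩
  obtain ⟨x0, hx0S, hx0⟩ := S.exists_max_image (fun y => y i0) hSne
  have hx0F : x0 ∈ F := (Finset.mem_filter.mp hx0S).1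
  have hx0A : x0 ∈ A := hA.mem_toFinset.mp hx0F
  have hx0M : h x0 = Mmax := (Finset.mem_filter.mp hx0S).2
  have nb : ∀ i : Fin d, h (x0 + unitVec d i) ≤ Mmax ∧ h (x0 - unitVec d i) ≤ Mmax := by
    intro i
    constructor
    · by_cases hy : x0 + unitVec d i ∈ A
      · exact hxm _ (hA.mem_toFinset.mpr hy)
      · refine le_trans (bdd _ hy ⟨i, Or.inr ?_⟩) hMM.le
        simpa using hx0A
    · by_cases hy : x0 - unitVec d i ∈ A
      · exact hxm _ (hA.mem_toFinset.mpr hy)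
      · refine le_trans (bdd _ hy ⟨i, Or.inl ?_⟩) hMM.le
        simpa using hx0A
  have hdpos : (0:ℝ) < 2 * d := by positivity
  have hsum : ∑ i, (h (x0 + unitVec d i) + h (x0 - unitVec d i)) = 2 * d * Mmax := by
    have := harm x0 hx0A
    rw [hx0M] at this
    field_simp at this
    linarith [this]
  have hkey : h (x0 + unitVec d i0) = Mmax := by
    by_contra hne
    have hlt : h (x0 + unitVec d i0) < Mmax := lt_of_le_of_ne (nb i0).1 hne
    have : ∑ i, (h (x0 + unitVec d i) + h (x0 - unitVec d i)) < ∑ _i : Fin d, (Mmax + Mmax) := by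
      apply Finset.sum_lt_sum
      · intro i _; exact add_le_add (nb i).1 (nb i).2
      · exact ⟨i0, Finset.mem_univ _, by linarith [(nb i0).2]⟩
    rw [hsum, Finset.sum_const] at this
    simp at this
    nlinarith
  by_cases hy : x0 + unitVec d i0 ∈ A
  · have hmem : x0 + unitVec d i0 ∈ S := Finset.mem_filter.mpr ⟨hA.mem_toFinset.mpr hy, hkey⟩
    have hle := hx0 _ hmem
    have : (x0 + unitVec d i0) i0 = x0 i0 + 1 := by simp [unitVec]
    omega
  · have := bdd _ hy ⟨i0, Or.inr (by simpa using hx0A)⟩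
    rw [hkey] at this
    exact absurd this (not_le.mpr hMM)

lemma minp {d : ℕ} (hd : 1 ≤ d) (A : Set (Site d)) (hA : A.Finite) (h : Site d → ℝ) (M : ℝ)
    (harm : ∀ x ∈ A, h x = (1/(2*(d:ℝ))) * ∑ i, (h (x + unitVec d i) + h (x - unitVec d i)))
    (bdd : ∀ x, x ∉ A → (∃ i : Fin d, x + unitVec d i ∈ A ∨ x - unitVec d i ∈ A) → M ≤ h x) :
    ∀ x ∈ A, M ≤ h x := by
  have harm' : ∀ x ∈ A, (-h) x = (1/(2*(d:ℝ))) * ∑ i, ((-h) (x + unitVec d i) + (-h) (x - unitVec d i)) := by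
    intro x hx
    have := harm x hx
    have hsum : ∑ i, ((-h) (x + unitVec d i) + (-h) (x - unitVec d i))
        = - ∑ i, (h (x + unitVec d i) + h (x - unitVec d i)) := by
      rw [← Finset.sum_neg_distrib]
      apply Finset.sum_congr rfl
      intros; simp only [Pi.neg_apply]; ring
    rw [hsum]
    simp only [Pi.neg_apply]
    linarith [this]
  have := maxp hd A hA (-h) (-M) harm' (fun x hx hi => by simpa using bdd x hx hi)
  intro x hx
  have := this x hx
  simp only [Pi.neg_apply] at this
  linarith

section exists_exit
variable {d : ℕ} (A : Set (Site d)) (hA : A.Finite)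

def extz (hA : A.Finite) (f : ↥hA.toFinset → ℝ) (x : Site d) : ℝ :=
  if hx : x ∈ hA.toFinset then f ⟨x, hx⟩ else 0

lemma extz_add (f g : ↥hA.toFinset → ℝ) (x : Site d) :
    extz A hA (f + g) x = extz A hA f x + extz A hA g x := by
  unfold extz; split <;> simp

lemma extz_smul (c : ℝ) (f : ↥hA.toFinset → ℝ) (x : Site d) :
    extz A hA (c • f) x = c * extz A hA f x := by
  unfold extz; split <;> simp

def Tmap (hd : 1 ≤ d) : (↥hA.toFinset → ℝ) →ₗ[ℝ] (↥hA.toFinset → ℝ) where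
  toFun f x := f x - (1/(2*(d:ℝ))) * ∑ i, (extz A hA f (↑x + unitVec d i) + extz A hA f (↑x - unitVec d i))
  map_add' f g := by
    funext x
    simp only [Pi.add_apply, extz_add, Finset.sum_add_distrib]
    ring
  map_smul' c f := by
    funext x
    simp only [Pi.smul_apply, extz_smul, RingHom.id_apply, smul_eq_mul, Finset.mul_sum]
    simp only [← mul_add, ← Finset.mul_sum]
    ring

lemma extz_mem (f : ↥hA.toFinset → ℝ) {x : Site d} (hx : x ∈ hA.toFinset) :
    extz A hA f x = f ⟨x, hx⟩ := dif_pos hx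

lemma Tmap_apply (hd : 1 ≤ d) (f : ↥hA.toFinset → ℝ) (x : ↥hA.toFinset) :
    Tmap A hA hd f x = f x - (1/(2*(d:ℝ))) * ∑ i, (extz A hA f (↑x + unitVec d i) + extz A hA f (↑x - unitVec d i)) := rfl

lemma Tmap_inj (hd : 1 ≤ d) : Function.Injective (Tmap A hA hd) := by
  rw [← LinearMap.ker_eq_bot, LinearMap.ker_eq_bot']
  intro f hf
  set h := extz A hA f with hh
  have hoff : ∀ x, x ∉ A → h x = 0 := by
    intro x hx
    simp only [hh, extz, dif_neg (fun hc => hx (hA.mem_toFinset.mp hc))]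
  have harm : ∀ x ∈ A, h x = (1/(2*(d:ℝ))) * ∑ i, (h (x + unitVec d i) + h (x - unitVec d i)) := by
    intro x hx
    have hxF : x ∈ hA.toFinset := hA.mem_toFinset.mpr hx
    have h0 : Tmap A hA hd f ⟨x, hxF⟩ = 0 := by rw [hf]; rfl
    rw [Tmap_apply] at h0
    have hxv : h x = f ⟨x, hxF⟩ := extz_mem A hA f hxF
    rw [hxv]
    linarith [h0]
  have hub : ∀ x ∈ A, h x ≤ 0 :=
    maxp hd A hA h 0 harm (fun x hx _ => le_of_eq (hoff x hx))
  have hlb : ∀ x ∈ A, 0 ≤ h x :=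
    minp hd A hA h 0 harm (fun x hx _ => ge_of_eq (hoff x hx))
  funext x
  have hx : (x : Site d) ∈ A := hA.mem_toFinset.mp x.2
  have : h x = 0 := le_antisymm (hub _ hx) (hlb _ hx)
  rw [hh, extz_mem A hA f x.2] at this
  simpa using this

lemma exists_exitFun (hfin : A.Finite) (hd : 1 ≤ d) : ∃ e, IsExitFun d A e := by
  have hsurj : Function.Surjective (Tmap A hfin hd) :=
    (LinearMap.injective_iff_surjective).mp (Tmap_inj A hfin hd)
  obtain ⟨f, hf⟩ := hsurj (fun _ => 1)
  refine ⟨extz A hfin f, ?_, ?_⟩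
  · intro x hx
    simp only [extz, dif_neg (fun hc => hx (hfin.mem_toFinset.mp hc))]
  · intro x hx
    have hxF : x ∈ hfin.toFinset := hfin.mem_toFinset.mpr hx
    have h0 : Tmap A hfin hd f ⟨x, hxF⟩ = 1 := by rw [hf]
    rw [Tmap_apply] at h0
    rw [extz_mem A hfin f hxF]
    linarith [h0]

end exists_exit

lemma ballVol_pos (d : ℕ) : 0 < ballVol d := by
  apply ENNReal.toReal_pos
  · exact (Metric.measure_ball_pos volume (0 : EuclideanSpace ℝ (Fin d)) one_pos).ne'
  · exact (MeasureTheory.measure_ball_lt_top).ne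

lemma lball_finite (d n : ℕ) (hd : 1 ≤ d) : (lball d n).Finite := by
  have hω := ballVol_pos d
  set B : ℝ := max 1 ((n:ℝ) / ballVol d) with hB
  have hB1 : (1:ℝ) ≤ B := le_max_left _ _
  have henorm : ∀ y ∈ lball d n, enorm y ≤ B := by
    intro y hy
    by_contra hgt
    push_neg at hgt
    have h1 : B ≤ enorm y ^ d := by
      calc B ≤ enorm y := hgt.le
      _ ≤ enorm y ^ d := le_self_pow₀ (le_trans hB1 hgt.le) (by omega)
    have h2 : ballVol d * enorm y ^ d < n := hy
    have h3 : (n:ℝ)/ballVol d ≤ B := le_max_right _ _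
    have h4 : (n:ℝ) ≤ B * ballVol d := by
      rw [div_le_iff₀ hω] at h3; linarith
    nlinarith
  apply Set.Finite.subset (Set.Finite.pi (fun i : Fin d => Set.finite_Icc (-(⌈B⌉) : ℤ) ⌈B⌉))
  intro y hy
  rw [Set.mem_pi]
  intro i _
  have h1 : |(y i : ℝ)| ≤ B := by
    have := abs_coord_le_enorm y i
    linarith [henorm y hy]
  have h2 : |(y i : ℝ)| ≤ (⌈B⌉ : ℝ) := le_trans h1 (Int.le_ceil B)
  rw [Set.mem_Icc]
  have := abs_le.mp h2
  constructor <;> [exact_mod_cast this.1; exact_mod_cast this.2]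

theorem exit_time_lball_asymp (d : ℕ) (hd : 1 ≤ d) :
    ∃ C : ℝ, ∀ n : ℕ, 1 ≤ n →
      |exitFun d (lball d n) 0 - ((n : ℝ) / ballVol d) ^ ((2 : ℝ) / (d : ℝ))|
        ≤ C * (n : ℝ) ^ ((1 : ℝ) / (d : ℝ)) := by
  have hd0 : (d:ℝ) ≠ 0 := by positivity
  have hω := ballVol_pos d
  refine ⟨2 / ballVol d ^ ((1:ℝ)/(d:ℝ)) + 1, ?_⟩
  intro n hn
  set ω := ballVol d with hωdef
  set A := lball d n with hAdef
  have hAfin : A.Finite := lball_finite d n hd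
  have hex : ∃ e, IsExitFun d A e := exists_exitFun A hAfin hd
  have hefun : exitFun d A = hex.choose := dif_pos hex
  set e := hex.choose with he
  have hee : IsExitFun d A e := hex.choose_spec
  set R : ℝ := ((n:ℝ)/ω) ^ ((1:ℝ)/(d:ℝ)) with hR
  have hnω : 0 < (n:ℝ)/ω := by positivity
  have hR0 : 0 < R := Real.rpow_pos_of_pos hnω _
  have hRd : R ^ (d:ℕ) = (n:ℝ)/ω := by
    rw [hR, ← Real.rpow_natCast (((n:ℝ)/ω) ^ ((1:ℝ)/(d:ℝ))) d, ← Real.rpow_mul hnω.le]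
    rw [one_div_mul_cancel hd0, Real.rpow_one]
  have hR2 : R ^ 2 = ((n:ℝ)/ω) ^ ((2:ℝ)/(d:ℝ)) := by
    rw [hR, ← Real.rpow_natCast (((n:ℝ)/ω) ^ ((1:ℝ)/(d:ℝ))) 2, ← Real.rpow_mul hnω.le]
    norm_num
    congr 1
    ring
  have hmem : ∀ x : Site d, x ∈ A ↔ enorm x < R := by
    intro x
    have : x ∈ A ↔ ω * enorm x ^ d < (n:ℝ) := Iff.rfl
    rw [this]
    have hn' : (n:ℝ) = ω * R ^ d := by rw [hRd]; field_simp
    rw [hn']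
    rw [mul_lt_mul_iff_right₀ hω]
    exact pow_lt_pow_iff_left₀ (enorm_nonneg' x) hR0.le (by omega)
  -- the harmonic comparison function
  set h : Site d → ℝ := fun x => e x + nsq x with hh
  have hdne : (2*(d:ℝ)) ≠ 0 := by positivity
  have harm : ∀ x ∈ A, h x = (1/(2*(d:ℝ))) * ∑ i, (h (x + unitVec d i) + h (x - unitVec d i)) := by
    intro x hx
    have h2 := hee.2 x hx
    have h3 : ∑ i, (h (x + unitVec d i) + h (x - unitVec d i))
        = (∑ i, (e (x + unitVec d i) + e (x - unitVec d i))) + (2*d*nsq x + 2*d) := by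
      rw [← nsq_sum x, ← Finset.sum_add_distrib]
      apply Finset.sum_congr rfl
      intros; simp only [hh]; ring
    rw [h3]
    simp only [hh]
    field_simp at h2 ⊢
    linarith
  -- neighbors of A have nsq at most (R+1)^2
  have nbound : ∀ a : Site d, a ∈ A → ∀ i : Fin d,
      nsq (a + unitVec d i) ≤ (R+1)^2 ∧ nsq (a - unitVec d i) ≤ (R+1)^2 := by
    intro a ha i
    have h1 : enorm a < R := (hmem a).mp ha
    have h2 := abs_coord_le_enorm a i
    have h3 := enorm_sq' a
    have h4 := enorm_nonneg' a
    have h5 := abs_le.mp h2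
    constructor
    · rw [nsq_add_unit]; nlinarith
    · rw [nsq_sub_unit]; nlinarith
  have bddU : ∀ x, x ∉ A → (∃ i : Fin d, x + unitVec d i ∈ A ∨ x - unitVec d i ∈ A) → h x ≤ (R+1)^2 := by
    intro x hx ⟨i, hi⟩
    have hex0 : e x = 0 := hee.1 x hx
    have hhx : h x = nsq x := by simp [hh, hex0]
    rw [hhx]
    rcases hi with hi | hi
    · have := (nbound _ hi i).2
      have hxx : (x + unitVec d i) - unitVec d i = x := by ring
      rwa [hxx] at this
    · have := (nbound _ hi i).1
      have hxx : (x - unitVec d i) + unitVec d i = x := by ring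
      rwa [hxx] at this
  have bddL : ∀ x, x ∉ A → (∃ i : Fin d, x + unitVec d i ∈ A ∨ x - unitVec d i ∈ A) → R^2 ≤ h x := by
    intro x hx _
    have hex0 : e x = 0 := hee.1 x hx
    have hRle : R ≤ enorm x := by
      by_contra hlt
      push_neg at hlt
      exact hx ((hmem x).mpr hlt)
    have : R^2 ≤ enorm x ^ 2 := pow_le_pow_left₀ hR0.le hRle 2
    rw [enorm_sq'] at this
    simp only [hh, hex0, zero_add]
    linarith
  have h0A : (0 : Site d) ∈ A := by
    rw [hmem]
    have : enorm (0 : Site d) = 0 := by simp [enorm, nsq]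
    rw [this]; exact hR0
  have hub := maxp hd A hAfin h ((R+1)^2) harm bddU 0 h0A
  have hlb := minp hd A hAfin h (R^2) harm bddL 0 h0A
  have hnsq0 : nsq (0 : Site d) = 0 := by simp [nsq]
  have hh0 : h 0 = e 0 := by simp [hh, hnsq0]
  rw [hh0] at hub hlb
  -- assemble
  rw [hefun]
  rw [← hR2]
  have habs : |e 0 - R^2| ≤ 2*R + 1 := by
    rw [abs_le]
    constructor <;> nlinarith
  have hsplit : R = (n:ℝ) ^ ((1:ℝ)/(d:ℝ)) / ω ^ ((1:ℝ)/(d:ℝ)) := by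
    rw [hR, Real.div_rpow (by positivity) hω.le]
  have hn1 : (1:ℝ) ≤ (n:ℝ) ^ ((1:ℝ)/(d:ℝ)) := by
    apply Real.one_le_rpow (by exact_mod_cast hn) (by positivity)
  have hωp : (0:ℝ) < ω ^ ((1:ℝ)/(d:ℝ)) := Real.rpow_pos_of_pos hω _
  calc |e 0 - R^2| ≤ 2*R + 1 := habs
    _ = 2 * ((n:ℝ) ^ ((1:ℝ)/(d:ℝ)) / ω ^ ((1:ℝ)/(d:ℝ))) + 1 := by rw [← hsplit]
    _ ≤ (2 / ω ^ ((1:ℝ)/(d:ℝ))) * (n:ℝ) ^ ((1:ℝ)/(d:ℝ)) + 1 * (n:ℝ) ^ ((1:ℝ)/(d:ℝ)) := by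
        have h2ab : 2 * ((n:ℝ) ^ ((1:ℝ)/(d:ℝ)) / ω ^ ((1:ℝ)/(d:ℝ)))
            = (2 / ω ^ ((1:ℝ)/(d:ℝ))) * (n:ℝ) ^ ((1:ℝ)/(d:ℝ)) := by ring
        linarith
    _ = (2 / ballVol d ^ ((1:ℝ)/(d:ℝ)) + 1) * (n:ℝ) ^ ((1:ℝ)/(d:ℝ)) := by rw [hωdef]; ring

end RotorRouterPaper
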